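/- Let R be the ring of integers of a number field (or any Dedekind domain), and let (f, 𝔣) be a nonzero pseudo-polynomial. Write f = Σ_i c_{α_i} x^{α_i} with c_{α_i} ≠ 0. Suppose g = Σ_i c̄_{α_i} x^{α_i} ∈ R[x] and 𝔑 is a fractional ideal of R with c_{α_i} − c̄_{α_i} ∈ 𝔑𝔣⁻¹ for all i. Then (f, 𝔣) reduces to 0 modulo {(g, 𝔣), (1, 𝔑)}. -/

import Mathlib

open MvPolynomial

noncomputable def mdeg {σ : Type*} (m : MonomialOrder σ) {K : Type*} [CommSemiring K]
    (f : MvPolynomial σ K) : σ →₀ ℕ :=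
  m.toSyn.symm (f.support.sup fun d => m.toSyn d)

noncomputable def plc {σ : Type*} (m : MonomialOrder σ) {K : Type*} [CommSemiring K]
    (f : MvPolynomial σ K) : K :=
  f.coeff (mdeg m f)

lemma mdeg_mem {σ K : Type*} [CommSemiring K] (m : MonomialOrder σ)
    {f : MvPolynomial σ K} (hf : f ≠ 0) : mdeg m f ∈ f.support := by
  obtain ⟨d, hd, hsup⟩ :=
    f.support.exists_mem_eq_sup (support_nonempty.mpr hf) (fun d => m.toSyn d)
  rw [mdeg, hsup]
  simpa using hd

lemma le_mdeg {σ K : Type*} [CommSemiring K] (m : MonomialOrder σ)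
    {f : MvPolynomial σ K} {d : σ →₀ ℕ} (hd : d ∈ f.support) :
    m.toSyn d ≤ m.toSyn (mdeg m f) := by
  rw [mdeg, AddEquiv.apply_symm_apply]
  exact Finset.le_sup hd

lemma mdeg_one {σ K : Type*} [CommSemiring K] [Nontrivial K] (m : MonomialOrder σ) :
    mdeg m (1 : MvPolynomial σ K) = 0 := by
  classical
  have h1 : (1 : MvPolynomial σ K).support = {0} := by
    rw [show (1 : MvPolynomial σ K) = monomial 0 1 from rfl, support_monomial]
    simp
  rw [mdeg, h1]
  simp

lemma plc_one {σ K : Type*} [CommSemiring K] [Nontrivial K] (m : MonomialOrder σ) :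
    plc m (1 : MvPolynomial σ K) = 1 := by
  rw [plc, mdeg_one, coeff_zero_one]

/-- One step reduction of `(f, 𝔣)` to `(h, 𝔣)` with respect to the family of
pseudo-polynomials `(gᵢ, 𝔤ᵢ)`: there are `aᵢ ∈ 𝔤ᵢ 𝔣⁻¹`, supported on the set
`J = {i : LM(gᵢ) ∣ LM(f)}`, with `LC(f) = ∑ aᵢ LC(gᵢ)` and
`h = f - ∑ aᵢ x^{deg f - deg gᵢ} gᵢ`. -/
def OneStep {R : Type*} [CommRing R] [IsDomain R] [IsDedekindDomain R] {n l : ℕ}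
    (m : MonomialOrder (Fin n))
    (g : Fin l → MvPolynomial (Fin n) (FractionRing R))
    (𝔤 : Fin l → FractionalIdeal (nonZeroDivisors R) (FractionRing R))
    (𝔣 : FractionalIdeal (nonZeroDivisors R) (FractionRing R))
    (f h : MvPolynomial (Fin n) (FractionRing R)) : Prop :=
  ∃ a : Fin l → FractionRing R,
    (∀ i, a i ∈ 𝔤 i * 𝔣⁻¹) ∧
    (∀ i, a i ≠ 0 → ∃ γ, mdeg m f = mdeg m (g i) + γ) ∧
    plc m f = ∑ i, a i * plc m (g i) ∧
    h = f - ∑ i, (monomial (mdeg m f - mdeg m (g i)) (a i)) * g i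

section Steps

variable {R : Type*} [CommRing R] [IsDomain R] [IsDedekindDomain R] {n : ℕ}
    (m : MonomialOrder (Fin n))
    (g : MvPolynomial (Fin n) (FractionRing R))
    (𝔣 𝔑 : FractionalIdeal (nonZeroDivisors R) (FractionRing R))

lemma stepN {f : MvPolynomial (Fin n) (FractionRing R)}
    (hc : plc m f ∈ 𝔑 * 𝔣⁻¹) :
    OneStep m ![g, 1] ![𝔣, 𝔑] 𝔣 f (f - monomial (mdeg m f) (plc m f)) := by
  refine ⟨![0, plc m f], ?_, ?_, ?_, ?_⟩
  · rw [Fin.forall_fin_two]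
    exact ⟨by simpa using FractionalIdeal.zero_mem _, by simpa using hc⟩
  · rw [Fin.forall_fin_two]
    refine ⟨by simp, fun _ => ⟨mdeg m f, by simp [mdeg_one]⟩⟩
  · simp [Fin.sum_univ_two, plc_one]
  · simp [Fin.sum_univ_two, mdeg_one]

lemma stepG (h𝔣 : 𝔣 ≠ 0) {f : MvPolynomial (Fin n) (FractionRing R)}
    (hD : mdeg m f ∈ g.support) (hsupp : g.support ⊆ f.support)
    (hc : f.coeff (mdeg m f) - g.coeff (mdeg m f) ∈ 𝔑 * 𝔣⁻¹) :
    OneStep m ![g, 1] ![𝔣, 𝔑] 𝔣 f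
      (f - g - monomial (mdeg m f) (f.coeff (mdeg m f) - g.coeff (mdeg m f))) := by
  have hg0 : g ≠ 0 := by
    intro h; rw [h] at hD; simp at hD
  have hDg : mdeg m g = mdeg m f := by
    apply m.toSyn.injective
    exact le_antisymm (le_mdeg m (hsupp (mdeg_mem m hg0))) (le_mdeg m hD)
  refine ⟨![1, f.coeff (mdeg m f) - g.coeff (mdeg m f)], ?_, ?_, ?_, ?_⟩
  · rw [Fin.forall_fin_two]
    constructor
    · rw [Matrix.cons_val_zero, Matrix.cons_val_zero, mul_inv_cancel₀ h𝔣]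
      exact FractionalIdeal.one_mem_one _
    · simpa using hc
  · rw [Fin.forall_fin_two]
    exact ⟨fun _ => ⟨0, by simp [hDg]⟩, fun _ => ⟨mdeg m f, by simp [mdeg_one]⟩⟩
  · rw [Fin.sum_univ_two]
    simp only [Matrix.cons_val_zero, Matrix.cons_val_one, Matrix.head_cons, plc_one, mul_one,
      one_mul]
    rw [plc, plc, hDg]
    ring
  · rw [Fin.sum_univ_two]
    simp only [Matrix.cons_val_zero, Matrix.cons_val_one, Matrix.head_cons, mdeg_one, hDg,
      tsub_self, tsub_zero, mul_one, monomial_zero', C_1, one_mul]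
    ring

end Steps

lemma aux_red {R : Type*} [CommRing R] [IsDomain R] [IsDedekindDomain R] {n : ℕ}
    (m : MonomialOrder (Fin n))
    (g : MvPolynomial (Fin n) (FractionRing R))
    (𝔣 𝔑 : FractionalIdeal (nonZeroDivisors R) (FractionRing R))
    (h𝔣 : 𝔣 ≠ 0) :
    ∀ N : ℕ, ∀ f : MvPolynomial (Fin n) (FractionRing R), f.support.card ≤ N →
      ((g.support ⊆ f.support ∧ ∀ d, f.coeff d - g.coeff d ∈ 𝔑 * 𝔣⁻¹) ∨
        (∀ d, f.coeff d ∈ 𝔑 * 𝔣⁻¹)) →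
      Relation.ReflTransGen (OneStep m ![g, 1] ![𝔣, 𝔑] 𝔣) f 0 := by
  intro N
  induction N with
  | zero =>
    intro f hcard _
    have : f = 0 := by
      rw [← support_eq_empty, ← Finset.card_eq_zero]
      omega
    rw [this]
  | succ N ih =>
    intro f hcard hyp
    by_cases hf : f = 0
    · rw [hf]
    have hDm : mdeg m f ∈ f.support := mdeg_mem m hf
    have hcard' : ∀ h : MvPolynomial (Fin n) (FractionRing R),
        h.support ⊆ f.support.erase (mdeg m f) → h.support.card ≤ N := by
      intro h hsub
      have := Finset.card_le_card hsub
      have := Finset.card_erase_of_mem hDm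
      omega
    rcases hyp with ⟨hsupp, hdiff⟩ | hall
    · by_cases hgD : mdeg m f ∈ g.support
      · -- reduce using (g, 𝔣) and (1, 𝔑) simultaneously
        set h := f - g - monomial (mdeg m f) (f.coeff (mdeg m f) - g.coeff (mdeg m f)) with hh
        have hco : ∀ d, h.coeff d =
            if d = mdeg m f then 0 else f.coeff d - g.coeff d := by
          intro d
          by_cases hd : d = mdeg m f
          · simp [hh, hd, coeff_monomial]
          · have hne : ¬ mdeg m f = d := fun e => hd e.symm
            simp [hh, coeff_monomial, hne, hd]
        have hsub : h.support ⊆ f.support.erase (mdeg m f) := by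
          intro d hd
          rw [mem_support_iff, hco] at hd
          rw [Finset.mem_erase]
          split_ifs at hd with hdD
          · exact absurd rfl hd
          · refine ⟨hdD, ?_⟩
            rw [mem_support_iff]
            intro h0
            have hg0 : g.coeff d = 0 := by
              by_contra hg
              exact (mem_support_iff.mp (hsupp (mem_support_iff.mpr hg)) h0).elim
            rw [h0, hg0, sub_zero] at hd
            exact hd rfl
        refine Relation.ReflTransGen.head
          (stepG m g 𝔣 𝔑 h𝔣 hgD hsupp (hdiff (mdeg m f))) (ih h (hcard' h hsub) (Or.inr ?_))
        intro d
        rw [hco]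
        split_ifs
        · exact FractionalIdeal.zero_mem _
        · exact hdiff d
      · -- leading coeff of f is in 𝔑𝔣⁻¹, reduce by (1, 𝔑)
        have hg0 : g.coeff (mdeg m f) = 0 := notMem_support_iff.mp hgD
        have hc : plc m f ∈ 𝔑 * 𝔣⁻¹ := by
          have := hdiff (mdeg m f)
          rwa [hg0, sub_zero] at this
        set h := f - monomial (mdeg m f) (plc m f) with hh
        have hco : ∀ d, h.coeff d = if d = mdeg m f then 0 else f.coeff d := by
          intro d
          by_cases hd : d = mdeg m f
          · simp [hh, hd, coeff_monomial, plc]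
          · have hne : ¬ mdeg m f = d := fun e => hd e.symm
            simp [hh, coeff_monomial, hne, hd]
        have hsub : h.support ⊆ f.support.erase (mdeg m f) := by
          intro d hd
          rw [mem_support_iff, hco] at hd
          rw [Finset.mem_erase]
          split_ifs at hd with hdD
          · exact absurd rfl hd
          · exact ⟨hdD, mem_support_iff.mpr hd⟩
        refine Relation.ReflTransGen.head (stepN m g 𝔣 𝔑 hc)
          (ih h (hcard' h hsub) (Or.inl ⟨?_, ?_⟩))
        · intro d hd
          have hdD : d ≠ mdeg m f := by
            intro e
            exact hgD (e ▸ hd)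
          rw [mem_support_iff, hco, if_neg hdD]
          exact mem_support_iff.mp (hsupp hd)
        · intro d
          rw [hco]
          split_ifs with hd
          · rw [hd, hg0, zero_sub, neg_zero]
            exact FractionalIdeal.zero_mem _
          · exact hdiff d
    · have hc : plc m f ∈ 𝔑 * 𝔣⁻¹ := hall (mdeg m f)
      set h := f - monomial (mdeg m f) (plc m f) with hh
      have hco : ∀ d, h.coeff d = if d = mdeg m f then 0 else f.coeff d := by
        intro d
        by_cases hd : d = mdeg m f
        · simp [hh, hd, coeff_monomial, plc]
        · have hne : ¬ mdeg m f = d := fun e => hd e.symm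
          simp [hh, coeff_monomial, hne, hd]
      have hsub : h.support ⊆ f.support.erase (mdeg m f) := by
        intro d hd
        rw [mem_support_iff, hco] at hd
        rw [Finset.mem_erase]
        split_ifs at hd with hdD
        · exact absurd rfl hd
        · exact ⟨hdD, mem_support_iff.mpr hd⟩
      refine Relation.ReflTransGen.head (stepN m g 𝔣 𝔑 hc)
        (ih h (hcard' h hsub) (Or.inr ?_))
      intro d
      rw [hco]
      split_ifs
      · exact FractionalIdeal.zero_mem _
      · exact hall d

/-- Let `R` be a Dedekind domain, `(f, 𝔣)` a nonzero pseudo-polynomial,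
`g ∈ R[x]` a polynomial supported on the monomials of `f`, and `𝔑` a fractional ideal
with `coeff(f) − coeff(g) ∈ 𝔑𝔣⁻¹` coefficientwise. Then `(f, 𝔣)` reduces to `0`
modulo `{(g, 𝔣), (1, 𝔑)}`. -/
theorem stmt19 {R : Type*} [CommRing R] [IsDomain R] [IsDedekindDomain R] {n : ℕ}
    (m : MonomialOrder (Fin n))
    (f g : MvPolynomial (Fin n) (FractionRing R))
    (𝔣 𝔑 : FractionalIdeal (nonZeroDivisors R) (FractionRing R))
    (hf : f ≠ 0) (h𝔣 : 𝔣 ≠ 0) (h𝔑 : 𝔑 ≠ 0)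
    (hpf : ∀ c ∈ 𝔣, ∀ d, c * f.coeff d ∈
      (1 : FractionalIdeal (nonZeroDivisors R) (FractionRing R)))
    (hgsupp : g.support ⊆ f.support)
    (hgR : ∀ d, g.coeff d ∈ (1 : FractionalIdeal (nonZeroDivisors R) (FractionRing R)))
    (hdiff : ∀ d, f.coeff d - g.coeff d ∈ 𝔑 * 𝔣⁻¹) :
    Relation.ReflTransGen (OneStep m ![g, 1] ![𝔣, 𝔑] 𝔣) f 0 :=
  aux_red m g 𝔣 𝔑 h𝔣 f.support.card f le_rfl (Or.inl ⟨hgsupp, hdiff⟩)
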